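/- Let (y_n) be a nondecreasing sequence of positive integers, and let A(n,k) be the number of valid n-tuples with first entry k, where (x_1,...,x_n) is valid if x_1 ≤ y_n and x_{j+1} ≤ min(x_j, y_{n-j}) for 1 ≤ j ≤ n-1. Then for any n ≥ 1 and k with k+1 ≤ y_{n+1}, we have A(n+1, k+1) = A(n+1, k) + A(n, k+1). -/

import Mathlib

/-- `x : Fin n → ℕ` (0-indexed version of `(x_1,…,x_n)`) is a valid n-tuple for the
input sequence `y`: `x_1 ≤ y n` and `x_{j+1} ≤ min (x_j) (y (n - j))` for `1 ≤ j ≤ n-1`. -/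
def IsValid (y : ℕ → ℕ) (n : ℕ) (x : Fin n → ℕ) : Prop :=
  (∀ h : 0 < n, x ⟨0, h⟩ ≤ y n) ∧
  ∀ i : ℕ, ∀ h : i + 1 < n,
    x ⟨i + 1, h⟩ ≤ min (x ⟨i, Nat.lt_of_succ_lt h⟩) (y (n - (i + 1)))

/-- `A y n k` : number of valid n-tuples whose first entry equals `k`. -/
noncomputable def A (y : ℕ → ℕ) (n k : ℕ) : ℕ :=
  Nat.card {x : Fin n → ℕ // IsValid y n x ∧ ∀ h : 0 < n, x ⟨0, h⟩ = k}

/-- `W y n` : total number of valid n-tuples. -/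
noncomputable def W (y : ℕ → ℕ) (n : ℕ) : ℕ :=
  Nat.card {x : Fin n → ℕ // IsValid y n x}

lemma valid_bounded (y : ℕ → ℕ) (n : ℕ) (x : Fin n → ℕ) (hx : IsValid y n x) :
    ∀ i : Fin n, x i ≤ y n := by
  rintro ⟨i, hi⟩
  induction i with
  | zero => exact hx.1 hi
  | succ i ih =>
    exact le_trans (le_trans (hx.2 i hi) (min_le_left _ _)) (ih (Nat.lt_of_succ_lt hi))

lemma valid_finite (y : ℕ → ℕ) (n : ℕ) : {x : Fin n → ℕ | IsValid y n x}.Finite := by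
  apply Set.Finite.subset (Set.Finite.pi (fun _ : Fin n => Set.finite_Iic (y n)))
  intro x hx
  simp only [Set.mem_pi, Set.mem_univ, Set.mem_Iic, forall_true_left]
  exact fun i => valid_bounded y n x hx i

/-- Deleting the first coordinate gives a bijection between valid `(n+1)`-tuples starting
with `c ≤ y (n+1)` and valid `n`-tuples with first entry at most `c`. -/
lemma A_succ (y : ℕ → ℕ) (n : ℕ) (hn : 0 < n) (c : ℕ) (hc : c ≤ y (n + 1)) :
    A y (n + 1) c = Nat.card {t : Fin n → ℕ // IsValid y n t ∧ t ⟨0, hn⟩ ≤ c} := by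
  apply Nat.card_congr
  refine ⟨fun x => ⟨Fin.tail x.1, ⟨?_, ?_⟩, ?_⟩, fun t => ⟨Fin.cons c t.1, ⟨?_, ?_⟩, ?_⟩, ?_, ?_⟩
  · -- first entry of tail bounded
    intro h
    have h2 := x.2.1.2 0 (Nat.succ_lt_succ h)
    simpa [Fin.tail] using le_trans h2 (min_le_right _ _)
  · -- step condition for tail
    intro i h
    have h2 := x.2.1.2 (i + 1) (Nat.succ_lt_succ h)
    simpa [Fin.tail, Nat.succ_sub_succ] using h2
  · -- tail's first entry ≤ c
    have h2 := x.2.1.2 0 (Nat.succ_lt_succ hn)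
    have h0 := x.2.2 (Nat.succ_pos n)
    calc Fin.tail x.1 ⟨0, hn⟩ ≤ x.1 ⟨0, Nat.succ_pos n⟩ :=
          le_trans h2 (min_le_left _ _)
      _ = c := h0
  · -- cons: first entry bounded
    intro h
    simpa [show (⟨0, h⟩ : Fin (n+1)) = 0 from rfl] using hc
  · -- cons: step conditions
    intro i h
    match i with
    | 0 =>
      have hn' : 0 < n := Nat.lt_of_succ_lt_succ h
      have h1 : t.1 ⟨0, hn'⟩ ≤ c := t.2.2
      have h2 : t.1 ⟨0, hn'⟩ ≤ y n := t.2.1.1 hn'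
      rw [show (⟨1, h⟩ : Fin (n+1)) = Fin.succ ⟨0, hn'⟩ from rfl, Fin.cons_succ,
        show (⟨0, Nat.lt_of_succ_lt h⟩ : Fin (n+1)) = 0 from rfl, Fin.cons_zero,
        show n + 1 - 1 = n from rfl]
      exact le_min h1 h2
    | j + 1 =>
      have hj : j + 1 < n := Nat.lt_of_succ_lt_succ h
      have h2 := t.2.1.2 j hj
      rw [show (⟨j + 1 + 1, h⟩ : Fin (n+1)) = Fin.succ ⟨j + 1, hj⟩ from rfl, Fin.cons_succ,
        show (⟨j + 1, Nat.lt_of_succ_lt h⟩ : Fin (n+1)) =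
          Fin.succ ⟨j, Nat.lt_of_succ_lt hj⟩ from rfl, Fin.cons_succ,
        Nat.succ_sub_succ]
      exact h2
  · -- cons: first entry equals c
    intro h
    simp [show (⟨0, h⟩ : Fin (n+1)) = 0 from rfl]
  · -- left inverse
    rintro ⟨x, hx, hx0⟩
    apply Subtype.ext
    have h0 : x 0 = c := by
      have := hx0 (Nat.succ_pos n)
      simpa [show (⟨0, Nat.succ_pos n⟩ : Fin (n+1)) = 0 from rfl] using this
    show Fin.cons c (Fin.tail x) = x
    rw [← h0, Fin.cons_self_tail]
  · -- right inverse
    rintro ⟨t, ht⟩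
    apply Subtype.ext
    show Fin.tail (Fin.cons (α := fun _ => ℕ) c t) = t
    exact Fin.tail_cons (α := fun _ => ℕ) c t

theorem stmt1 (y : ℕ → ℕ) (hmono : ∀ m, 1 ≤ m → y m ≤ y (m + 1))
    (hpos : ∀ m, 1 ≤ m → 1 ≤ y m) (n k : ℕ) (hn : 1 ≤ n) (hk : k + 1 ≤ y (n + 1)) :
    A y (n + 1) (k + 1) = A y (n + 1) k + A y n (k + 1) := by
  have hn0 : 0 < n := hn
  have e1 : A y (n + 1) (k + 1)
      = Nat.card {t : Fin n → ℕ // IsValid y n t ∧ t ⟨0, hn0⟩ ≤ k + 1} :=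
    A_succ y n hn0 (k + 1) hk
  have e2 : A y (n + 1) k
      = Nat.card {t : Fin n → ℕ // IsValid y n t ∧ t ⟨0, hn0⟩ ≤ k} :=
    A_succ y n hn0 k (le_trans (Nat.le_succ k) hk)
  have e3 : A y n (k + 1)
      = Nat.card {t : Fin n → ℕ // IsValid y n t ∧ t ⟨0, hn0⟩ = k + 1} := by
    apply Nat.card_congr
    apply Equiv.subtypeEquivRight
    intro x
    constructor
    · rintro ⟨h1, h2⟩; exact ⟨h1, h2 hn0⟩
    · rintro ⟨h1, h2⟩; exact ⟨h1, fun _ => h2⟩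
  rw [e1, e2, e3]
  -- now a counting identity over finite sets
  let S1 : Set (Fin n → ℕ) := {t | IsValid y n t ∧ t ⟨0, hn0⟩ ≤ k}
  let S2 : Set (Fin n → ℕ) := {t | IsValid y n t ∧ t ⟨0, hn0⟩ = k + 1}
  have hU : {t : Fin n → ℕ | IsValid y n t ∧ t ⟨0, hn0⟩ ≤ k + 1} = S1 ∪ S2 := by
    ext t
    simp only [S1, S2, Set.mem_setOf_eq, Set.mem_union]
    constructor
    · rintro ⟨h1, h2⟩
      rcases Nat.lt_or_ge (t ⟨0, hn0⟩) (k + 1) with h | h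
      · exact Or.inl ⟨h1, Nat.lt_succ_iff.mp h⟩
      · exact Or.inr ⟨h1, le_antisymm h2 h⟩
    · rintro (⟨h1, h2⟩ | ⟨h1, h2⟩)
      · exact ⟨h1, le_trans h2 (Nat.le_succ k)⟩
      · exact ⟨h1, le_of_eq h2⟩
  have hd : Disjoint S1 S2 := by
    rw [Set.disjoint_left]
    intro t ht1 ht2
    have h1 : t ⟨0, hn0⟩ ≤ k := ht1.2
    have h2 : t ⟨0, hn0⟩ = k + 1 := ht2.2
    rw [h2] at h1
    exact Nat.not_succ_le_self k h1
  have hf1 : S1.Finite := (valid_finite y n).subset fun t ht => ht.1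
  have hf2 : S2.Finite := (valid_finite y n).subset fun t ht => ht.1
  have := Set.ncard_union_eq hd hf1 hf2
  calc Nat.card {t : Fin n → ℕ // IsValid y n t ∧ t ⟨0, hn0⟩ ≤ k + 1}
      = ({t : Fin n → ℕ | IsValid y n t ∧ t ⟨0, hn0⟩ ≤ k + 1}).ncard :=
        Nat.card_coe_set_eq {t : Fin n → ℕ | IsValid y n t ∧ t ⟨0, hn0⟩ ≤ k + 1}
    _ = (S1 ∪ S2).ncard := congrArg Set.ncard hU
    _ = S1.ncard + S2.ncard := this
    _ = _ := congrArg₂ (· + ·) (Nat.card_coe_set_eq S1).symm (Nat.card_coe_set_eq S2).symm
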